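/- Let S ⊆ ℕ^d be a Frobenius generalized numerical semigroup with Frobenius gap F(S). Then g(S) ≤ (‖F(S)‖ − g(S)) · t(S); equivalently, g(S)/(‖F(S)‖ − g(S)) ≤ t(S). -/

import Mathlib

open Finset

/-- A generalized numerical semigroup (GNS) in `ℕ^d`: contains `0`, is closed under
componentwise addition, and has finite complement. -/
def IsGNS {d : ℕ} (S : Set (Fin d → ℕ)) : Prop :=
  (0 : Fin d → ℕ) ∈ S ∧ (∀ a ∈ S, ∀ b ∈ S, a + b ∈ S) ∧ Sᶜ.Finite

/-- A relaxed monomial order on `ℕ^d`: a (strict) total order `r` such that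
`r v w → r v (w + u)` and `0` is below every nonzero element. -/
def IsRMO {d : ℕ} (r : (Fin d → ℕ) → (Fin d → ℕ) → Prop) : Prop :=
  IsStrictTotalOrder (Fin d → ℕ) r ∧
  (∀ v w u : Fin d → ℕ, r v w → r v (w + u)) ∧
  (∀ v : Fin d → ℕ, v ≠ 0 → r 0 v)

/-- `F` is the Frobenius gap of `S` with respect to the order `r`, i.e. the
`r`-maximum of the gap set `ℕ^d \ S`. -/
def IsFrobGapWrt {d : ℕ} (S : Set (Fin d → ℕ))
    (r : (Fin d → ℕ) → (Fin d → ℕ) → Prop) (F : Fin d → ℕ) : Prop :=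
  F ∉ S ∧ ∀ x, x ∉ S → x ≠ F → r x F

/-- `F` is a Frobenius allowable gap of `S`: it is the Frobenius gap with respect to
some relaxed monomial order. -/
def FrobAllowable {d : ℕ} (S : Set (Fin d → ℕ)) (F : Fin d → ℕ) : Prop :=
  ∃ r, IsRMO r ∧ IsFrobGapWrt S r F

/-- `F` is a maximal gap of `S` with respect to the natural (componentwise)
partial order on `ℕ^d`. -/
def MaxGap {d : ℕ} (S : Set (Fin d → ℕ)) (F : Fin d → ℕ) : Prop :=
  F ∉ S ∧ ∀ x, x ∉ S → F ≤ x → x = F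

/-- The set of Frobenius allowable gaps of `S`, i.e. the maximal elements of the gap
set under the natural partial order. -/
def FA {d : ℕ} (S : Set (Fin d → ℕ)) : Set (Fin d → ℕ) := {F | MaxGap S F}

/-- The set of pseudo-Frobenius gaps of `S`. -/
def PF {d : ℕ} (S : Set (Fin d → ℕ)) : Set (Fin d → ℕ) :=
  {P | P ∉ S ∧ ∀ s ∈ S, s ≠ 0 → P + s ∈ S}

/-- `S` is quasi-irreducible: for every gap `x`, either `2x` is Frobenius allowable or
`F - x ∈ S` for some Frobenius allowable gap `F`. -/
def QuasiIrreducible {d : ℕ} (S : Set (Fin d → ℕ)) : Prop :=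
  ∀ x, x ∉ S → (x + x ∈ FA S ∨ ∃ F ∈ FA S, ∃ s ∈ S, x + s = F)

/-- `S` is a Frobenius GNS with Frobenius gap `F`: the gap set has `F` as its unique
maximal element under the natural partial order. -/
def IsFrobeniusGNS {d : ℕ} (S : Set (Fin d → ℕ)) (F : Fin d → ℕ) : Prop :=
  IsGNS S ∧ MaxGap S F ∧ ∀ x, MaxGap S x → x = F

/-- `‖F‖ = ∏ i (F^(i) + 1)`, the number of lattice points in the box `[0, F]`. -/
def normF {d : ℕ} (F : Fin d → ℕ) : ℕ := ∏ i, (F i + 1)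

/-- `N(F)`: the number of Frobenius GNS in `ℕ^d` with Frobenius gap `F`. -/
noncomputable def NF {d : ℕ} (F : Fin d → ℕ) : ℕ :=
  {S : Set (Fin d → ℕ) | IsFrobeniusGNS S F}.ncard

theorem exists_maximal_wrt_aux {α : Type*} [PartialOrder α] {s : Set α} (h : s.Finite)
    (hs : s.Nonempty) : ∃ a ∈ s, ∀ a' ∈ s, a ≤ a' → a = a' := by
  obtain ⟨y, hm⟩ := h.exists_maximalFor id _ hs
  exact ⟨y, hm.1, fun a ha hle => le_antisymm hle (hm.2 ha hle)⟩

/-- For a Frobenius GNS `S`, `g(S) ≤ (‖F(S)‖ - g(S)) · t(S)`. -/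
theorem genus_le_type_bound {d : ℕ} (S : Set (Fin d → ℕ)) (F : Fin d → ℕ)
    (h : IsFrobeniusGNS S F) :
    (Sᶜ.ncard : ℤ) ≤ ((normF F : ℤ) - (Sᶜ.ncard : ℤ)) * ((PF S).ncard : ℤ) := by
  obtain ⟨⟨h0, hadd, hfin⟩, hmaxF, huniq⟩ := h
  -- every gap is ≤ F
  have hle : ∀ x, x ∉ S → x ≤ F := by
    intro x hx
    have hsub : {y | y ∉ S ∧ x ≤ y} ⊆ Sᶜ := fun y hy => hy.1
    have hfin' : {y | y ∉ S ∧ x ≤ y}.Finite := hfin.subset hsub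
    have hne : ({y | y ∉ S ∧ x ≤ y} : Set _).Nonempty := ⟨x, hx, le_refl x⟩
    obtain ⟨y, hy, hymax⟩ := exists_maximal_wrt_aux hfin' hne
    have hyMax : MaxGap S y := by
      refine ⟨hy.1, fun z hz hyz => ?_⟩
      exact (hymax z ⟨hz, le_trans hy.2 hyz⟩ hyz).symm
    have := huniq y hyMax
    exact this ▸ hy.2
  -- for every gap x there is a pseudo-Frobenius P with P - x ∈ S
  have hPF0 : ∀ x, x ∉ S → ∃ P, P ∈ PF S ∧ ∃ s, s ∈ S ∧ x + s = P := by
    intro x hx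
    have hsub : {y | y ∉ S ∧ ∃ s, s ∈ S ∧ x + s = y} ⊆ Sᶜ := fun y hy => hy.1
    have hfin' := hfin.subset hsub
    have hne : ({y | y ∉ S ∧ ∃ s, s ∈ S ∧ x + s = y} : Set _).Nonempty :=
      ⟨x, hx, 0, h0, add_zero x⟩
    obtain ⟨y, hy, hymax⟩ := exists_maximal_wrt_aux hfin' hne
    obtain ⟨s₀, hs₀, hxs₀⟩ := hy.2
    refine ⟨y, ⟨hy.1, fun s hs hs0 => ?_⟩, s₀, hs₀, hxs₀⟩
    by_contra hys
    have hmem : y + s ∈ {y | y ∉ S ∧ ∃ s, s ∈ S ∧ x + s = y} :=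
      ⟨hys, s₀ + s, hadd s₀ hs₀ s hs, by rw [← add_assoc, hxs₀]⟩
    have h1 : y ≤ y + s := le_add_of_nonneg_right (by positivity)
    have h2 : y + s = y + 0 := by simpa using hymax _ hmem h1
    exact hs0 (add_left_cancel h2)
  classical
  choose! P hPmem s hsmem heq using hPF0
  -- counting
  set T : Set (Fin d → ℕ) := S ∩ Set.Iic F with hT
  have hIicfin : (Set.Iic F).Finite := Set.finite_Iic F
  have hTfin : T.Finite := hIicfin.subset Set.inter_subset_right
  have hPFfin : (PF S).Finite := hfin.subset fun P hP => hP.1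
  have hcsub : Sᶜ ⊆ Set.Iic F := fun x hx => hle x hx
  -- partition of Iic F
  have hpart : (Set.Iic F).ncard = Sᶜ.ncard + T.ncard := by
    rw [← Set.ncard_union_eq (by
        rw [Set.disjoint_left]; intro a ha haT; exact ha haT.1) hfin hTfin]
    congr 1
    ext x
    constructor
    · intro hx
      by_cases hxS : x ∈ S
      · exact Or.inr ⟨hxS, hx⟩
      · exact Or.inl hxS
    · rintro (hx | hx)
      · exact hcsub hx
      · exact hx.2
  have hIiccard : (Set.Iic F).ncard = normF F := by
    rw [← Finset.coe_Iic, Set.ncard_coe_finset, Pi.card_Iic]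
    simp [normF]
  -- injection Sᶜ → T × PF S
  have hinj : Sᶜ.ncard ≤ (T ×ˢ PF S).ncard := by
    apply Set.ncard_le_ncard_of_injOn (fun x => (s x, P x)) ?_ ?_ (hTfin.prod hPFfin)
    · intro x hx
      have hx' : x ∉ S := hx
      refine ⟨⟨hsmem x hx', ?_⟩, hPmem x hx'⟩
      · -- s x ≤ F
        have hPgap : P x ∉ S := (hPmem x hx').1
        have : P x ≤ F := hle _ hPgap
        have hsle : s x ≤ P x := by
          rw [← heq x hx']; exact le_add_of_nonneg_left (by positivity)
        exact le_trans hsle this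
    · intro a ha b hb hab
      have h1 : s a = s b := congrArg Prod.fst hab
      have h2 : P a = P b := congrArg Prod.snd hab
      have := (heq a ha).trans (h2 ▸ (heq b hb).symm)
      rw [h1] at this
      exact add_right_cancel this
  have hprod : (T ×ˢ PF S).ncard = T.ncard * (PF S).ncard := by
    rw [← Nat.card_coe_set_eq, ← Nat.card_coe_set_eq, ← Nat.card_coe_set_eq,
      Nat.card_congr (Equiv.Set.prod T (PF S)), Nat.card_prod]
  have key : Sᶜ.ncard ≤ T.ncard * (PF S).ncard := hprod ▸ hinj
  have hT' : (normF F : ℤ) - (Sᶜ.ncard : ℤ) = (T.ncard : ℤ) := by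
    rw [← hIiccard, hpart]; push_cast; ring
  rw [hT']
  exact_mod_cast key
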